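/- arXiv:1412.3284 — 2 statements merged into one kernel-verified Lean document; each statement's English description precedes it below -/
import Mathlib

section
/- Let A be a compact metric space, f = Σ_m c_m δ_{ξ_m} a finite signed measure supported on a finite set Ξ = {ξ_m} ⊂ A with real coefficients c_m, and Π a finite-dimensional space of continuous real functions on A spanned by P_1, ..., P_D. Suppose that for every choice of signs u_m ∈ {-1, +1} there exists q ∈ Π with q(ξ_m) = u_m for all ξ_m ∈ Ξ and |q(ξ)| < 1 for all ξ ∈ A \ Ξ. Then f is the unique signed Borel measure g on A minimizing ‖g‖_TV subject to the constraints ∫ P_k dg = ∫ P_k df for all k = 1, ..., D. -/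
open MeasureTheory

/-- Integration of a function against a signed measure, via its Jordan decomposition. -/
noncomputable def signedIntegral {A : Type*} [MeasurableSpace A]
    (g : SignedMeasure A) (P : A → ℝ) : ℝ :=
  (∫ x, P x ∂g.toJordanDecomposition.posPart) - ∫ x, P x ∂g.toJordanDecomposition.negPart

/-- The total variation norm of a signed measure. -/
noncomputable def tvNorm {A : Type*} [MeasurableSpace A] (g : SignedMeasure A) : ℝ :=
  (g.totalVariation Set.univ).toReal

open scoped NNReal ENNReal
open Set

section Aux
open scoped Classical

variable {A : Type*} [MetricSpace A] [CompactSpace A] [MeasurableSpace A] [BorelSpace A]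
variable {ι : Type*} [Fintype ι]

lemma contInt {μ : Measure A} [IsFiniteMeasure μ] {h : A → ℝ} (hh : Continuous h) :
    Integrable h μ :=
  hh.integrable_of_hasCompactSupport
    (IsCompact.of_isClosed_subset isCompact_univ (isClosed_tsupport h) (Set.subset_univ _))

/-- A finite nonnegative combination of Dirac measures. -/
noncomputable def dsum (w : ι → ℝ≥0) (ξ : ι → A) : Measure A :=
  ∑ m, w m • Measure.dirac (ξ m)

instance dsum_finite (w : ι → ℝ≥0) (ξ : ι → A) : IsFiniteMeasure (dsum w ξ) := by
  constructor
  rw [dsum, Measure.finset_sum_apply]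
  refine ENNReal.sum_lt_top.2 fun m _ => ?_
  rw [Measure.smul_apply, ENNReal.smul_def, smul_eq_mul]
  exact ENNReal.mul_lt_top ENNReal.coe_lt_top (measure_lt_top _ _)

lemma dsum_apply (w : ι → ℝ≥0) (ξ : ι → A) (S : Set A) :
    dsum w ξ S = ∑ m, if ξ m ∈ S then (w m : ℝ≥0∞) else 0 := by
  rw [dsum, Measure.finset_sum_apply]
  refine Finset.sum_congr rfl fun m _ => ?_
  rw [Measure.smul_apply, Measure.dirac_apply, Set.indicator_apply]
  by_cases hm : ξ m ∈ S <;> simp [hm, ENNReal.smul_def]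

lemma dsum_apply_toReal (w : ι → ℝ≥0) (ξ : ι → A) (S : Set A) :
    ((dsum w ξ) S).toReal = ∑ m, if ξ m ∈ S then (w m : ℝ) else 0 := by
  rw [dsum_apply, ENNReal.toReal_sum]
  · refine Finset.sum_congr rfl fun m _ => ?_
    by_cases hm : ξ m ∈ S <;> simp [hm]
  · intro m _
    by_cases hm : ξ m ∈ S <;> simp [hm]

lemma integral_dsum (w : ι → ℝ≥0) (ξ : ι → A) {h : A → ℝ} (hh : Continuous h) :
    ∫ x, h x ∂(dsum w ξ) = ∑ m, (w m : ℝ) * h (ξ m) := by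
  rw [dsum, integral_finset_sum_measure (fun m _ => contInt hh)]
  refine Finset.sum_congr rfl fun m _ => ?_
  rw [integral_smul_nnreal_measure, integral_dirac, NNReal.smul_def, smul_eq_mul]

lemma dsum_mutuallySingular (ξ : ι → A) (hinj : Function.Injective ξ) (w v : ι → ℝ≥0)
    (hwv : ∀ m, w m = 0 ∨ v m = 0) : dsum w ξ ⟂ₘ dsum v ξ := by
  refine ⟨(ξ '' {m | w m ≠ 0})ᶜ, (Set.toFinite _).measurableSet.compl, ?_, ?_⟩
  · rw [dsum_apply]
    refine Finset.sum_eq_zero fun m _ => ?_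
    by_cases hw : w m = 0
    · simp [hw]
    · have hm : ξ m ∈ ξ '' {m | w m ≠ 0} := ⟨m, hw, rfl⟩
      simp [Set.mem_compl_iff, hm]
  · rw [compl_compl, dsum_apply]
    refine Finset.sum_eq_zero fun m _ => ?_
    by_cases hm : ξ m ∈ ξ '' {m | w m ≠ 0}
    · have hv : v m = 0 := by
        obtain ⟨m', hm', he⟩ := hm
        cases hinj he
        exact (hwv m).resolve_left hm'
      simp [hm, hv]
    · simp [hm]

lemma sum_sm_apply (c : ι → ℝ) (ξ : ι → A) (E : Set A) (hE : MeasurableSet E) :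
    (∑ m, c m • (Measure.dirac (ξ m)).toSignedMeasure : SignedMeasure A) E
      = ∑ m, if ξ m ∈ E then c m else 0 := by
  have hco : ⇑(∑ m, c m • (Measure.dirac (ξ m)).toSignedMeasure : SignedMeasure A)
      = ∑ m, ⇑(c m • (Measure.dirac (ξ m)).toSignedMeasure : SignedMeasure A) :=
    map_sum (FunLike.coeAddMonoidHom (SignedMeasure A) (Set A) ℝ) _ _
  rw [hco, Finset.sum_apply]
  refine Finset.sum_congr rfl fun m _ => ?_
  rw [VectorMeasure.smul_apply, Measure.toSignedMeasure_apply_measurable hE,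
    measureReal_def, Measure.dirac_apply, Set.indicator_apply]
  by_cases hm : ξ m ∈ E <;> simp [hm]

lemma jordan_sum_dirac (c : ι → ℝ) (ξ : ι → A) (hinj : Function.Injective ξ) :
    (∑ m, c m • (Measure.dirac (ξ m)).toSignedMeasure : SignedMeasure A).toJordanDecomposition
      = ⟨dsum (fun m => (c m).toNNReal) ξ, dsum (fun m => (-(c m)).toNNReal) ξ,
          dsum_mutuallySingular ξ hinj _ _ (fun m => by
            rcases le_total (c m) 0 with h | h
            · exact Or.inl (Real.toNNReal_of_nonpos h)
            · exact Or.inr (Real.toNNReal_of_nonpos (neg_nonpos.2 h)))⟩ := by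
  apply MeasureTheory.SignedMeasure.toJordanDecomposition_eq
  ext E hE
  rw [sum_sm_apply c ξ E hE, JordanDecomposition.toSignedMeasure, VectorMeasure.sub_apply,
    Measure.toSignedMeasure_apply_measurable hE, Measure.toSignedMeasure_apply_measurable hE,
    measureReal_def, measureReal_def,
    dsum_apply_toReal, dsum_apply_toReal, ← Finset.sum_sub_distrib]
  refine Finset.sum_congr rfl fun m _ => ?_
  by_cases hm : ξ m ∈ E <;>
    simp [hm, Real.coe_toNNReal', max_zero_sub_max_neg_zero_eq_self]

lemma signedIntegral_sum_dirac (c : ι → ℝ) (ξ : ι → A) (hinj : Function.Injective ξ)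
    {h : A → ℝ} (hh : Continuous h) :
    signedIntegral (∑ m, c m • (Measure.dirac (ξ m)).toSignedMeasure : SignedMeasure A) h
      = ∑ m, c m * h (ξ m) := by
  rw [signedIntegral, jordan_sum_dirac c ξ hinj]
  simp only [integral_dsum _ _ hh]
  rw [← Finset.sum_sub_distrib]
  refine Finset.sum_congr rfl fun m _ => ?_
  rw [← sub_mul, Real.coe_toNNReal', Real.coe_toNNReal', max_zero_sub_max_neg_zero_eq_self]

lemma tvNorm_sum_dirac (c : ι → ℝ) (ξ : ι → A) (hinj : Function.Injective ξ) :
    tvNorm (∑ m, c m • (Measure.dirac (ξ m)).toSignedMeasure : SignedMeasure A)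
      = ∑ m, |c m| := by
  rw [tvNorm, SignedMeasure.totalVariation, jordan_sum_dirac c ξ hinj]
  rw [Measure.add_apply, ENNReal.toReal_add (measure_ne_top _ _) (measure_ne_top _ _),
    dsum_apply_toReal, dsum_apply_toReal, ← Finset.sum_add_distrib]
  refine Finset.sum_congr rfl fun m _ => ?_
  simp [Real.coe_toNNReal', max_zero_add_max_neg_zero_eq_abs_self]

lemma signedIntegral_lin (g : SignedMeasure A) {D : ℕ} (P : Fin D → A → ℝ)
    (hP : ∀ k, Continuous (P k)) (a : Fin D → ℝ) :
    signedIntegral g (fun x => ∑ k, a k * P k x) = ∑ k, a k * signedIntegral g (P k) := by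
  unfold signedIntegral
  beta_reduce
  rw [integral_finset_sum _ (fun k _ => contInt (h := fun x => a k * P k x) (continuous_const.mul (hP k))),
    integral_finset_sum _ (fun k _ => contInt (h := fun x => a k * P k x) (continuous_const.mul (hP k))),
    ← Finset.sum_sub_distrib]
  refine Finset.sum_congr rfl fun k _ => ?_
  rw [integral_const_mul, integral_const_mul, mul_sub]

omit [MetricSpace A] [CompactSpace A] [BorelSpace A] in
lemma tvNorm_eq (g : SignedMeasure A) :
    tvNorm g = (g.toJordanDecomposition.posPart Set.univ).toReal
      + (g.toJordanDecomposition.negPart Set.univ).toReal := by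
  rw [tvNorm, SignedMeasure.totalVariation, Measure.add_apply,
    ENNReal.toReal_add (measure_ne_top _ _) (measure_ne_top _ _)]

lemma integral_le_of_le_one {μ : Measure A} [IsFiniteMeasure μ] {q : A → ℝ}
    (hq : Continuous q) (hb : ∀ x, q x ≤ 1) : ∫ x, q x ∂μ ≤ (μ Set.univ).toReal := by
  have := integral_mono (μ := μ) (contInt hq) (integrable_const 1) hb
  simpa [integral_const, measureReal_def] using this

lemma null_compl_of_integral_eq {μ : Measure A} [IsFiniteMeasure μ] {q : A → ℝ}
    (hq : Continuous q) (hb : ∀ x, q x ≤ 1)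
    (heq : ∫ x, q x ∂μ = (μ Set.univ).toReal) {S : Set A}
    (hS : ∀ x ∉ S, q x < 1) : μ Sᶜ = 0 := by
  have hint : Integrable (fun x => 1 - q x) μ := (integrable_const 1).sub (contInt hq)
  have hz : ∫ x, (1 - q x) ∂μ = 0 := by
    rw [integral_sub (integrable_const 1) (contInt hq)]
    simp [integral_const, heq, measureReal_def]
  have hnn : 0 ≤ fun x => 1 - q x := fun x => sub_nonneg.2 (hb x)
  have hae := (integral_eq_zero_iff_of_nonneg hnn hint).1 hz
  have hnull : μ {x | ¬ (1 - q x = 0)} = 0 := by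
    have := hae
    rw [Filter.EventuallyEq, ae_iff] at this
    simpa using this
  refine measure_mono_null (fun x hx => ?_) hnull
  have := hS x hx
  simp only [Set.mem_setOf_eq]
  intro h
  nlinarith

lemma eq_dsum_of_null_compl (μ : Measure A) [IsFiniteMeasure μ] (ξ : ι → A)
    (hinj : Function.Injective ξ) (h0 : μ (Set.range ξ)ᶜ = 0) :
    μ = dsum (fun m => (μ {ξ m}).toNNReal) ξ := by
  ext E hE
  have hrng : MeasurableSet (Set.range ξ) := (Set.finite_range ξ).measurableSet
  have h1 : μ E = μ (E ∩ Set.range ξ) := by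
    have hsplit := measure_inter_add_diff E hrng (μ := μ)
    have hdiff : μ (E \ Set.range ξ) = 0 :=
      measure_mono_null (fun x hx => hx.2) h0
    rw [hdiff, add_zero] at hsplit
    exact hsplit.symm
  have h2 : E ∩ Set.range ξ = ⋃ m ∈ Finset.univ.filter (fun m => ξ m ∈ E), {ξ m} := by
    ext x
    simp only [Set.mem_inter_iff, Set.mem_range, Set.mem_iUnion, Finset.mem_filter,
      Finset.mem_univ, true_and, Set.mem_singleton_iff]
    constructor
    · rintro ⟨hxE, m, rfl⟩
      exact ⟨m, hxE, rfl⟩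
    · rintro ⟨m, hm, rfl⟩
      exact ⟨hm, m, rfl⟩
  have hd : (↑(Finset.univ.filter (fun m => ξ m ∈ E)) : Set ι).PairwiseDisjoint
      (fun m => ({ξ m} : Set A)) := fun a _ b _ hab => by
    simp [Set.disjoint_singleton, hinj.ne hab]
  rw [h1, h2, measure_biUnion_finset hd (fun m _ => measurableSet_singleton _),
    dsum_apply]
  rw [Finset.sum_filter]
  refine Finset.sum_congr rfl fun m _ => ?_
  by_cases hm : ξ m ∈ E <;> simp [hm, ENNReal.coe_toNNReal (measure_ne_top μ _)]

end Aux

theorem dual_certificate_implies_unique_recovery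
    {A : Type*} [MetricSpace A] [CompactSpace A] [MeasurableSpace A] [BorelSpace A]
    {ι : Type*} [Fintype ι] (c : ι → ℝ) (ξ : ι → A) (hinj : Function.Injective ξ)
    (D : ℕ) (P : Fin D → A → ℝ) (hP : ∀ k, Continuous (P k))
    (f : SignedMeasure A)
    (hf : f = ∑ m, c m • (Measure.dirac (ξ m)).toSignedMeasure)
    (hdual : ∀ u : ι → ℝ, (∀ m, u m = 1 ∨ u m = -1) →
      ∃ a : Fin D → ℝ,
        (∀ m, (∑ k, a k * P k (ξ m)) = u m) ∧
        (∀ x : A, x ∉ Set.range ξ → |∑ k, a k * P k x| < 1)) :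
    ∀ g : SignedMeasure A,
      (∀ k, signedIntegral g (P k) = signedIntegral f (P k)) →
      tvNorm f ≤ tvNorm g ∧ (tvNorm g ≤ tvNorm f → g = f) := by
  classical
  subst hf
  set f : SignedMeasure A := ∑ m, c m • (Measure.dirac (ξ m)).toSignedMeasure with hfdef
  intro g hg
  -- moment matching extends to linear combinations
  have hmatch : ∀ a : Fin D → ℝ,
      signedIntegral g (fun x => ∑ k, a k * P k x)
        = signedIntegral f (fun x => ∑ k, a k * P k x) := by
    intro a
    rw [signedIntegral_lin g P hP a, signedIntegral_lin f P hP a]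
    exact Finset.sum_congr rfl fun k _ => by rw [hg k]
  set p := g.toJordanDecomposition.posPart with hpdef
  set n := g.toJordanDecomposition.negPart with hndef
  -- the certificate for the sign pattern of c
  set u0 : ι → ℝ := fun m => if 0 ≤ c m then 1 else -1 with hu0
  obtain ⟨a0, ha0, hb0⟩ := hdual u0 (fun m => by by_cases h : 0 ≤ c m <;> simp [hu0, h])
  set q0 : A → ℝ := fun x => ∑ k, a0 k * P k x with hq0
  have hq0c : Continuous q0 := by
    apply continuous_finset_sum
    exact fun k _ => continuous_const.mul (hP k)
  have hq0b : ∀ x, |q0 x| ≤ 1 := by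
    intro x
    by_cases hx : x ∈ Set.range ξ
    · obtain ⟨m, rfl⟩ := hx
      have h1 : q0 (ξ m) = u0 m := ha0 m
      rw [h1, hu0]
      by_cases h : 0 ≤ c m <;> simp [h]
    · exact (hb0 x hx).le
  have hfq0 : signedIntegral f q0 = tvNorm f := by
    rw [hq0, signedIntegral_sum_dirac c ξ hinj (by
      apply continuous_finset_sum; exact fun k _ => continuous_const.mul (hP k)),
      tvNorm_sum_dirac c ξ hinj]
    refine Finset.sum_congr rfl fun m _ => ?_
    rw [ha0 m, hu0]
    by_cases h : 0 ≤ c m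
    · simp [h, abs_of_nonneg h]
    · push_neg at h
      simp [not_le.2 h, abs_of_neg h]
  have hgq0 : signedIntegral g q0 = tvNorm f := by
    rw [hq0, hmatch a0, ← hq0, hfq0]
  have hbound1 : ∫ x, q0 x ∂p ≤ (p Set.univ).toReal :=
    integral_le_of_le_one hq0c (fun x => (abs_le.1 (hq0b x)).2)
  have hbound2 : ∫ x, -q0 x ∂n ≤ (n Set.univ).toReal :=
    integral_le_of_le_one hq0c.neg (fun x => by
      have := (abs_le.1 (hq0b x)).1; linarith)
  have hgle : signedIntegral g q0 ≤ tvNorm g := by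
    rw [tvNorm_eq g, signedIntegral]
    have : ∫ x, -q0 x ∂n = -∫ x, q0 x ∂n := by rw [integral_neg]
    rw [this] at hbound2
    rw [← hpdef, ← hndef]
    linarith
  constructor
  · rw [← hgq0]; exact hgle
  · intro hle
    -- equality throughout
    have heq : signedIntegral g q0 = tvNorm g := le_antisymm hgle (by rw [hgq0]; exact hle)
    have hneg : ∫ x, -q0 x ∂n = -∫ x, q0 x ∂n := by rw [integral_neg]
    have hp1 : ∫ x, q0 x ∂p = (p Set.univ).toReal := by
      rw [signedIntegral, ← hpdef, ← hndef, tvNorm_eq g, ← hpdef, ← hndef] at heq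
      linarith
    have hn1 : ∫ x, -q0 x ∂n = (n Set.univ).toReal := by
      rw [signedIntegral, ← hpdef, ← hndef, tvNorm_eq g, ← hpdef, ← hndef] at heq
      linarith
    have hp0 : p (Set.range ξ)ᶜ = 0 :=
      null_compl_of_integral_eq hq0c (fun x => (abs_le.1 (hq0b x)).2) hp1
        (fun x hx => (abs_lt.1 (hb0 x hx)).2)
    have hn0 : n (Set.range ξ)ᶜ = 0 :=
      null_compl_of_integral_eq hq0c.neg
        (fun x => by have := (abs_le.1 (hq0b x)).1; rw [Pi.neg_apply]; linarith) hn1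
        (fun x hx => by have := (abs_lt.1 (hb0 x hx)).1; rw [Pi.neg_apply]; linarith)
    set wp : ι → ℝ≥0 := fun m => (p {ξ m}).toNNReal with hwp
    set wn : ι → ℝ≥0 := fun m => (n {ξ m}).toNNReal with hwn
    have hprep : p = dsum wp ξ := eq_dsum_of_null_compl p ξ hinj hp0
    have hnrep : n = dsum wn ξ := eq_dsum_of_null_compl n ξ hinj hn0
    set d : ι → ℝ := fun m => (wp m : ℝ) - (wn m : ℝ) with hd
    -- for every sign pattern, the moments give ∑ d m * u m = ∑ c m * u m
    have hkey : ∀ u : ι → ℝ, (∀ m, u m = 1 ∨ u m = -1) →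
        ∑ m, d m * u m = ∑ m, c m * u m := by
      intro u hu
      obtain ⟨a, ha, hb⟩ := hdual u hu
      have hqa : Continuous fun x => ∑ k, a k * P k x := by
        apply continuous_finset_sum; exact fun k _ => continuous_const.mul (hP k)
      have hfv : signedIntegral f (fun x => ∑ k, a k * P k x) = ∑ m, c m * u m := by
        rw [signedIntegral_sum_dirac c ξ hinj hqa]
        exact Finset.sum_congr rfl fun m _ => by rw [ha m]
      have hgv : signedIntegral g (fun x => ∑ k, a k * P k x) = ∑ m, d m * u m := by
        rw [signedIntegral, ← hpdef, ← hndef, hprep, hnrep, integral_dsum _ _ hqa,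
          integral_dsum _ _ hqa, ← Finset.sum_sub_distrib]
        refine Finset.sum_congr rfl fun m _ => ?_
        rw [ha m, hd, sub_mul]
      rw [← hgv, ← hfv]
      exact hmatch a
    -- deduce d = c
    have hdc : ∀ m, d m = c m := by
      intro m0
      have h1 := hkey (fun _ => 1) (fun _ => Or.inl rfl)
      have h2 := hkey (Function.update (fun _ => 1) m0 (-1)) (fun m => by
        by_cases h : m = m0
        · subst h; simp
        · simp [Function.update_of_ne h])
      have e1 : ∑ m, d m * (fun _ => (1:ℝ)) m - ∑ m, d m * Function.update (fun _ => (1:ℝ)) m0 (-1) m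
          = 2 * d m0 := by
        rw [← Finset.sum_sub_distrib]
        rw [Finset.sum_eq_single m0]
        · simp; ring
        · intro b _ hb
          simp [Function.update_of_ne hb]
        · intro h; exact absurd (Finset.mem_univ m0) h
      have e2 : ∑ m, c m * (fun _ => (1:ℝ)) m - ∑ m, c m * Function.update (fun _ => (1:ℝ)) m0 (-1) m
          = 2 * c m0 := by
        rw [← Finset.sum_sub_distrib]
        rw [Finset.sum_eq_single m0]
        · simp; ring
        · intro b _ hb
          simp [Function.update_of_ne hb]
        · intro h; exact absurd (Finset.mem_univ m0) h
      have := h1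
      have h3 : 2 * d m0 = 2 * c m0 := by
        rw [← e1, ← e2, h1, h2]
      linarith
    -- conclude g = f
    ext E hE
    have hgE : g E = (p E).toReal - (n E).toReal := by
      conv_lhs => rw [← g.toSignedMeasure_toJordanDecomposition]
      rw [JordanDecomposition.toSignedMeasure, VectorMeasure.sub_apply,
        Measure.toSignedMeasure_apply_measurable hE,
        Measure.toSignedMeasure_apply_measurable hE, measureReal_def, measureReal_def]
    rw [hgE, hprep, hnrep, dsum_apply_toReal, dsum_apply_toReal, ← Finset.sum_sub_distrib,
      hfdef, sum_sm_apply c ξ E hE]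
    refine Finset.sum_congr rfl fun m _ => ?_
    by_cases hm : ξ m ∈ E
    · simp only [hm, if_true]
      rw [← hdc m]
    · simp [hm]
end

section
/- Suppose the kernel bounds |F(x)| ≤ c/(1 + N·d(x, x_0))^k hold for a function F on S^2 for some k ≥ 3, and let Ξ ⊂ S^2 be ν/N-separated with ξ0 ∈ Ξ, and let ξ ∈ S^2 satisfy d(ξ, ξ0) ≤ ν/(2N). Then Σ_{ξ_m ∈ Ξ, ξ_m ≠ ξ0} |F(d(ξ, ξ_m))| ≤ c_k/ν^{k-1} for a constant c_k depending only on k and c. -/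
open scoped RealInnerProductSpace Classical

/-- Geodesic distance on the unit sphere `S² ⊂ ℝ³`. -/
noncomputable def geodesicDist (x y : EuclideanSpace ℝ (Fin 3)) : ℝ :=
  Real.arccos ⟪x, y⟫

namespace LKSB

open Real Finset

abbrev E3 := EuclideanSpace ℝ (Fin 3)

lemma norm_sub_sq_unit {x y : E3} (hx : ‖x‖ = 1) (hy : ‖y‖ = 1) :
    ‖x - y‖ ^ 2 = 2 - 2 * ⟪x, y⟫ := by
  rw [norm_sub_sq_real, hx, hy]; ring

lemma inner_le_one {x y : E3} (hx : ‖x‖ = 1) (hy : ‖y‖ = 1) : |⟪x, y⟫| ≤ 1 := by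
  have := abs_real_inner_le_norm x y
  rwa [hx, hy, one_mul] at this

lemma geo_nonneg (x y : E3) : 0 ≤ geodesicDist x y := Real.arccos_nonneg _

lemma geo_le_pi (x y : E3) : geodesicDist x y ≤ π := Real.arccos_le_pi _

lemma cos_geo {x y : E3} (hx : ‖x‖ = 1) (hy : ‖y‖ = 1) :
    Real.cos (geodesicDist x y) = ⟪x, y⟫ := by
  have h := inner_le_one hx hy
  rw [abs_le] at h
  exact Real.cos_arccos h.1 h.2

lemma chord_sq_eq {x y : E3} (hx : ‖x‖ = 1) (hy : ‖y‖ = 1) :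
    ‖x - y‖ ^ 2 = 4 * Real.sin (geodesicDist x y / 2) ^ 2 := by
  have h1 := norm_sub_sq_unit hx hy
  have h2 := cos_geo hx hy
  have h3 : Real.cos (geodesicDist x y) = 1 - 2 * Real.sin (geodesicDist x y / 2) ^ 2 := by
    have hc : Real.cos (2 * (geodesicDist x y / 2)) = 2 * Real.cos (geodesicDist x y / 2) ^ 2 - 1 :=
      Real.cos_two_mul _
    have hs := Real.sin_sq_add_cos_sq (geodesicDist x y / 2)
    have : (2 : ℝ) * (geodesicDist x y / 2) = geodesicDist x y := by ring
    rw [this] at hc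
    nlinarith
  rw [h1, ← h2, h3]; ring

lemma sin_half_geo_nonneg {x y : E3} :
    0 ≤ Real.sin (geodesicDist x y / 2) := by
  apply Real.sin_nonneg_of_nonneg_of_le_pi
  · linarith [geo_nonneg x y]
  · linarith [geo_le_pi x y, Real.pi_pos]

lemma chord_eq {x y : E3} (hx : ‖x‖ = 1) (hy : ‖y‖ = 1) :
    ‖x - y‖ = 2 * Real.sin (geodesicDist x y / 2) := by
  have h := chord_sq_eq hx hy
  have h0 : 0 ≤ 2 * Real.sin (geodesicDist x y / 2) := by linarith [sin_half_geo_nonneg (x := x) (y := y)]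
  nlinarith [norm_nonneg (x - y)]

lemma chord_le_arc {x y : E3} (hx : ‖x‖ = 1) (hy : ‖y‖ = 1) :
    ‖x - y‖ ≤ geodesicDist x y := by
  rw [chord_eq hx hy]
  have h1 : Real.sin (geodesicDist x y / 2) ≤ geodesicDist x y / 2 :=
    Real.sin_le (by linarith [geo_nonneg x y])
  linarith

lemma arc_le_chord {x y : E3} (hx : ‖x‖ = 1) (hy : ‖y‖ = 1) :
    5 / 8 * geodesicDist x y ≤ ‖x - y‖ := by
  rw [chord_eq hx hy]
  have h1 : 2 / π * (geodesicDist x y / 2) ≤ Real.sin (geodesicDist x y / 2) :=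
    Real.mul_le_sin (by linarith [geo_nonneg x y]) (by linarith [geo_le_pi x y])
  have hπ : π < 3.15 := Real.pi_lt_d2
  have hπ0 : 0 < π := Real.pi_pos
  have h2 : 5 / 8 * geodesicDist x y ≤ 2 / π * geodesicDist x y := by
    rcases le_or_gt (geodesicDist x y) 0 with h | h
    · have h0 : geodesicDist x y = 0 := le_antisymm h (geo_nonneg x y)
      rw [h0]; norm_num
    · have : (5:ℝ)/8 ≤ 2/π := by rw [div_le_div_iff₀ (by norm_num) hπ0]; nlinarith
      nlinarith
  linarith

lemma floor_abs_sub_lt {s t : ℝ} (h : ⌊s⌋ = ⌊t⌋) : |s - t| < 1 := by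
  have h1 := Int.floor_le s
  have h2 := Int.lt_floor_add_one s
  have h3 := Int.floor_le t
  have h4 := Int.lt_floor_add_one t
  rw [h] at h1 h2
  rw [abs_sub_lt_iff]
  constructor <;> linarith

lemma le_of_sq_le_sq {a b : ℝ} (hb : 0 ≤ b) (h : a ^ 2 ≤ b ^ 2) (ha : 0 ≤ a) : a ≤ b := by
  nlinarith


set_option maxHeartbeats 1000000 in
lemma cap_count (p : E3) (hp : ‖p‖ = 1) {δ R : ℝ} (hδ : 0 < δ) (hR : R ≤ 19/20)
    (T : Finset E3) (hT1 : ∀ x ∈ T, ‖x‖ = 1) (hT2 : ∀ x ∈ T, ‖x - p‖ ≤ R)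
    (hsep : ∀ x ∈ T, ∀ y ∈ T, x ≠ y → δ ≤ ‖x - y‖) :
    (T.card : ℝ) ≤ (10 * R / δ + 2) ^ 2 := by
  classical
  rcases T.eq_empty_or_nonempty with hT | ⟨x₀, hx₀⟩
  · rw [hT]; simpa using sq_nonneg (10 * R / δ + 2)
  have hR0 : 0 ≤ R := le_trans (norm_nonneg _) (hT2 x₀ hx₀)
  obtain ⟨b, hb⟩ : ∃ b : OrthonormalBasis (Fin 3) ℝ E3, b 0 = p := by
    have hcard : Module.finrank ℝ E3 = Fintype.card (Fin 3) := by
      simp [finrank_euclideanSpace_fin]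
    haveI : Subsingleton (({0} : Set (Fin 3)) : Type) :=
      ⟨fun a c => Subtype.ext (a.2.trans c.2.symm)⟩
    have horth : Orthonormal ℝ (({0} : Set (Fin 3)).restrict (fun _ : Fin 3 => p)) := by
      constructor
      · intro i; exact hp
      · intro i j hij; exact absurd (Subsingleton.elim i j) hij
    obtain ⟨b, hb⟩ := horth.exists_orthonormalBasis_extension_of_card_eq hcard
    exact ⟨b, hb 0 rfl⟩
  have parseval : ∀ w : E3,
      ⟪b 0, w⟫ ^ 2 + ⟪b 1, w⟫ ^ 2 + ⟪b 2, w⟫ ^ 2 = ‖w‖ ^ 2 := by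
    intro w
    have h1 : ‖b.repr w‖ = ‖w‖ := b.repr.norm_map w
    have h2 : ‖b.repr w‖ ^ 2 = ∑ i : Fin 3, (b.repr w i) ^ 2 := by
      rw [EuclideanSpace.norm_eq, Real.sq_sqrt (by positivity)]
      congr 1; ext i; rw [Real.norm_eq_abs, sq_abs]
    rw [← h1, h2, Fin.sum_univ_three]
    simp [OrthonormalBasis.repr_apply_apply]
  set a1 : E3 → ℝ := fun x => ⟪b 1, x⟫ with ha1
  set a2 : E3 → ℝ := fun x => ⟪b 2, x⟫ with ha2
  have hb1p : ⟪b 1, p⟫ = 0 := by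
    rw [← hb]; exact b.orthonormal.2 (by decide : (1 : Fin 3) ≠ 0)
  have hb2p : ⟪b 2, p⟫ = 0 := by
    rw [← hb]; exact b.orthonormal.2 (by decide : (2 : Fin 3) ≠ 0)
  have hcb : ∀ x ∈ T, |a1 x| ≤ R ∧ |a2 x| ≤ R := by
    intro x hx
    have e1 : a1 x = ⟪b 1, x - p⟫ := by simp [ha1, inner_sub_right, hb1p]
    have e2 : a2 x = ⟪b 2, x - p⟫ := by simp [ha2, inner_sub_right, hb2p]
    constructor
    · rw [e1]
      calc |⟪b 1, x - p⟫| ≤ ‖b 1‖ * ‖x - p‖ := abs_real_inner_le_norm _ _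
        _ = ‖x - p‖ := by rw [b.orthonormal.1 1, one_mul]
        _ ≤ R := hT2 x hx
    · rw [e2]
      calc |⟪b 2, x - p⟫| ≤ ‖b 2‖ * ‖x - p‖ := abs_real_inner_le_norm _ _
        _ = ‖x - p‖ := by rw [b.orthonormal.1 2, one_mul]
        _ ≤ R := hT2 x hx
  have hplane : ∀ x ∈ T, ∀ y ∈ T, x ≠ y →
      39 / 400 * δ ^ 2 ≤ (a1 x - a1 y) ^ 2 + (a2 x - a2 y) ^ 2 := by
    intro x hx y hy hxy
    have hxu := hT1 x hx
    have hyu := hT1 y hy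
    have hpx : ‖x - p‖ ^ 2 = 2 - 2 * ⟪p, x⟫ := by
      rw [norm_sub_sq_unit hxu hp, real_inner_comm]
    have hpy : ‖y - p‖ ^ 2 = 2 - 2 * ⟪p, y⟫ := by
      rw [norm_sub_sq_unit hyu hp, real_inner_comm]
    have hips : ⟪p, x - y⟫ = (‖y - p‖ ^ 2 - ‖x - p‖ ^ 2) / 2 := by
      rw [inner_sub_right]; rw [hpx, hpy]; ring
    have htri : |‖y - p‖ - ‖x - p‖| ≤ ‖x - y‖ := by
      have h := abs_norm_sub_norm_le (y - p) (x - p)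
      have e : y - p - (x - p) = y - x := by abel
      rw [e, norm_sub_rev y x] at h
      exact h
    have hsepxy := hsep x hx y hy hxy
    have hinn : |⟪p, x - y⟫| ≤ 19 / 20 * ‖x - y‖ := by
      rw [hips]
      have h1 : |‖y - p‖ ^ 2 - ‖x - p‖ ^ 2| ≤ ‖x - y‖ * (2 * R) := by
        have e : ‖y - p‖ ^ 2 - ‖x - p‖ ^ 2
            = (‖y - p‖ - ‖x - p‖) * (‖y - p‖ + ‖x - p‖) := by ring
        rw [e, abs_mul]
        have h2 : |‖y - p‖ + ‖x - p‖| ≤ 2 * R := by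
          rw [abs_of_nonneg (by positivity)]
          linarith [hT2 x hx, hT2 y hy]
        exact mul_le_mul htri h2 (abs_nonneg _) (norm_nonneg _)
      rw [abs_div]
      have : |(2 : ℝ)| = 2 := by norm_num
      rw [this]
      have hn : (0:ℝ) ≤ ‖x - y‖ := norm_nonneg _
      nlinarith [mul_le_mul_of_nonneg_left hR hn]
    have hw := parseval (x - y)
    have hb0w : ⟪b 0, x - y⟫ = ⟪p, x - y⟫ := by rw [hb]
    have ha1w : ⟪b 1, x - y⟫ = a1 x - a1 y := by simp [ha1, inner_sub_right]
    have ha2w : ⟪b 2, x - y⟫ = a2 x - a2 y := by simp [ha2, inner_sub_right]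
    rw [hb0w, ha1w, ha2w] at hw
    have hsq : ⟪p, x - y⟫ ^ 2 ≤ (19 / 20 * ‖x - y‖) ^ 2 := by
      have := abs_nonneg ⟪p, x - y⟫
      nlinarith [sq_abs ⟪p, x - y⟫]
    nlinarith [norm_nonneg (x - y)]
  set f : E3 → ℤ × ℤ := fun x => (⌊a1 x * 5 / δ⌋, ⌊a2 x * 5 / δ⌋) with hf
  have hinj : Set.InjOn f T := by
    intro x hx y hy hfxy
    by_contra hxy
    have h1 : |a1 x * 5 / δ - a1 y * 5 / δ| < 1 := by
      apply floor_abs_sub_lt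
      exact congrArg Prod.fst hfxy
    have h2 : |a2 x * 5 / δ - a2 y * 5 / δ| < 1 := by
      apply floor_abs_sub_lt
      exact congrArg Prod.snd hfxy
    have e1 : a1 x * 5 / δ - a1 y * 5 / δ = (a1 x - a1 y) * (5 / δ) := by ring
    have e2 : a2 x * 5 / δ - a2 y * 5 / δ = (a2 x - a2 y) * (5 / δ) := by ring
    have h5 : (0:ℝ) < 5 / δ := div_pos (by norm_num) hδ
    rw [e1, abs_mul, abs_of_pos h5] at h1
    rw [e2, abs_mul, abs_of_pos h5] at h2
    have h1' : |a1 x - a1 y| < δ / 5 := by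
      have hx2 : |a1 x - a1 y| < 1 / (5 / δ) := (lt_div_iff₀ h5).2 h1
      rwa [one_div_div] at hx2
    have h2' : |a2 x - a2 y| < δ / 5 := by
      have hx2 : |a2 x - a2 y| < 1 / (5 / δ) := (lt_div_iff₀ h5).2 h2
      rwa [one_div_div] at hx2
    have hp := hplane x hx y hy hxy
    have s1 : (a1 x - a1 y) ^ 2 < (δ / 5) ^ 2 := by
      nlinarith [abs_nonneg (a1 x - a1 y), sq_abs (a1 x - a1 y)]
    have s2 : (a2 x - a2 y) ^ 2 < (δ / 5) ^ 2 := by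
      nlinarith [abs_nonneg (a2 x - a2 y), sq_abs (a2 x - a2 y)]
    nlinarith
  set l : ℤ := ⌊-(5 * R / δ)⌋ with hl
  set u : ℤ := ⌊5 * R / δ⌋ with hu
  have hmaps : ∀ x ∈ T, f x ∈ (Finset.Icc l u) ×ˢ (Finset.Icc l u) := by
    intro x hx
    obtain ⟨h1, h2⟩ := hcb x hx
    rw [abs_le] at h1 h2
    have h5δ : (0:ℝ) ≤ 5 / δ := by positivity
    rw [Finset.mem_product, Finset.mem_Icc, Finset.mem_Icc]
    have key : ∀ t : ℝ, -R ≤ t → t ≤ R → l ≤ ⌊t * 5 / δ⌋ ∧ ⌊t * 5 / δ⌋ ≤ u := by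
      intro t ht1 ht2
      constructor
      · apply Int.floor_le_floor
        have : t * 5 / δ = t * (5 / δ) := by ring
        rw [this]
        have : -(5 * R / δ) = (-R) * (5 / δ) := by ring
        rw [this]
        exact mul_le_mul_of_nonneg_right ht1 h5δ
      · apply Int.floor_le_floor
        have e : t * 5 / δ = t * (5 / δ) := by ring
        have e2 : 5 * R / δ = R * (5 / δ) := by ring
        rw [e, e2]
        exact mul_le_mul_of_nonneg_right ht2 h5δ
    exact ⟨key _ h1.1 h1.2, key _ h2.1 h2.2⟩
  have hcard := Finset.card_le_card_of_injOn f hmaps hinj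
  have hIcc : ((Finset.Icc l u).card : ℝ) ≤ 10 * R / δ + 2 := by
    rw [Int.card_Icc]
    have hu' : (u : ℝ) ≤ 5 * R / δ := Int.floor_le _
    have hl' : -(5 * R / δ) - 1 < (l : ℝ) := Int.sub_one_lt_floor _
    rcases le_or_gt (u + 1 - l) 0 with h | h
    · rw [Int.toNat_of_nonpos h]
      have : (0:ℝ) ≤ 10 * R / δ + 2 := by positivity
      simpa using this
    · have h0 : ((u + 1 - l).toNat : ℤ) = u + 1 - l := Int.toNat_of_nonneg h.le
      have h0' : ((u + 1 - l).toNat : ℝ) = (u : ℝ) + 1 - (l : ℝ) := by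
        exact_mod_cast h0
      rw [h0']
      have e10 : 10 * R / δ = 5 * R / δ + 5 * R / δ := by ring
      rw [e10]
      linarith
  have hcardR : (T.card : ℝ) ≤ ((Finset.Icc l u).card : ℝ) * ((Finset.Icc l u).card : ℝ) := by
    have : ((Finset.Icc l u) ×ˢ (Finset.Icc l u)).card
        = (Finset.Icc l u).card * (Finset.Icc l u).card := Finset.card_product _ _
    have h2 : T.card ≤ (Finset.Icc l u).card * (Finset.Icc l u).card := this ▸ hcard
    exact_mod_cast h2
  have hnn : (0:ℝ) ≤ ((Finset.Icc l u).card : ℝ) := Nat.cast_nonneg _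
  nlinarith


set_option maxHeartbeats 1000000 in
lemma global_count {δ : ℝ} (hδ : 0 < δ) (T : Finset E3)
    (hT1 : ∀ x ∈ T, ‖x‖ = 1)
    (hsep : ∀ x ∈ T, ∀ y ∈ T, x ≠ y → δ ≤ ‖x - y‖) :
    (T.card : ℝ) ≤ 6 * (10 / δ + 2) ^ 2 := by
  classical
  set w : Fin 3 × Bool → E3 :=
    fun j => (if j.2 then (1:ℝ) else -1) • (EuclideanSpace.single j.1 (1:ℝ)) with hw
  have hwu : ∀ j, ‖w j‖ = 1 := by
    intro j
    rw [hw]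
    rcases j with ⟨i, s⟩
    rcases s <;> simp [norm_smul]
  have hcover : ∀ x : E3, ‖x‖ = 1 → ∃ j, ‖x - w j‖ ≤ 19/20 := by
    intro x hx
    have hsum : (x 0) ^ 2 + (x 1) ^ 2 + (x 2) ^ 2 = 1 := by
      have h2 : ‖x‖ ^ 2 = ∑ i : Fin 3, (x i) ^ 2 := by
        rw [EuclideanSpace.norm_eq, Real.sq_sqrt (by positivity)]
        congr 1; ext i; rw [Real.norm_eq_abs, sq_abs]
      rw [hx] at h2
      rw [Fin.sum_univ_three] at h2
      linarith [h2.symm]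
    have hbig : ∃ i : Fin 3, 1/3 ≤ (x i) ^ 2 := by
      by_contra hcon
      push_neg at hcon
      have h0 := hcon 0; have h1 := hcon 1; have h2 := hcon 2
      linarith
    obtain ⟨i, hi⟩ := hbig
    refine ⟨(i, decide (0 ≤ x i)), ?_⟩
    have hips : ⟪x, EuclideanSpace.single i (1:ℝ)⟫ = x i := by
      rw [EuclideanSpace.inner_single_right]
      simp
    have habs : (11/20 : ℝ) ≤ |x i| := by
      by_contra hcon
      push_neg at hcon
      have : (x i)^2 < (11/20)^2 := by
        nlinarith [abs_nonneg (x i), sq_abs (x i)]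
      nlinarith
    have hinn : (11/20 : ℝ) ≤ ⟪x, w (i, decide (0 ≤ x i))⟫ := by
      rw [hw]
      simp only [inner_smul_right]
      rcases le_or_gt 0 (x i) with hcase | hcase
      · rw [decide_eq_true hcase, if_pos rfl, one_mul, hips]
        rwa [abs_of_nonneg hcase] at habs
      · rw [decide_eq_false (not_le.2 hcase), if_neg (by simp), hips]
        rw [abs_of_neg hcase] at habs
        linarith
    have hn2 : ‖x - w (i, decide (0 ≤ x i))‖ ^ 2 ≤ (19/20)^2 := by
      rw [norm_sub_sq_unit hx (hwu _)]
      nlinarith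
    exact le_of_sq_le_sq (by norm_num) hn2 (norm_nonneg _)
  have hsub : T ⊆ Finset.univ.biUnion
      (fun j : Fin 3 × Bool => T.filter (fun x => ‖x - w j‖ ≤ 19/20)) := by
    intro x hx
    obtain ⟨j, hj⟩ := hcover x (hT1 x hx)
    exact Finset.mem_biUnion.2 ⟨j, Finset.mem_univ _, Finset.mem_filter.2 ⟨hx, hj⟩⟩
  have hcard : T.card ≤ ∑ j : Fin 3 × Bool, (T.filter (fun x => ‖x - w j‖ ≤ 19/20)).card :=
    le_trans (Finset.card_le_card hsub) (Finset.card_biUnion_le)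
  have heach : ∀ j : Fin 3 × Bool,
      (((T.filter (fun x => ‖x - w j‖ ≤ 19/20)).card : ℝ)) ≤ (10 / δ + 2) ^ 2 := by
    intro j
    have h := cap_count (w j) (hwu j) hδ (le_refl (19/20 : ℝ))
      (T.filter (fun x => ‖x - w j‖ ≤ 19/20))
      (fun x hx => hT1 x (Finset.mem_filter.1 hx).1)
      (fun x hx => (Finset.mem_filter.1 hx).2)
      (fun x hx y hy hxy => hsep x (Finset.mem_filter.1 hx).1 y (Finset.mem_filter.1 hy).1 hxy)
    refine le_trans h ?_
    have h1 : 10 * (19/20 : ℝ) / δ + 2 ≤ 10 / δ + 2 := by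
      have h2 : (10 * (19/20 : ℝ)) / δ ≤ 10 / δ := by
        gcongr
        norm_num
      linarith
    have h0 : (0:ℝ) ≤ 10 * (19/20 : ℝ) / δ + 2 := by positivity
    nlinarith
  have hcR : (T.card : ℝ) ≤ ∑ j : Fin 3 × Bool,
      (((T.filter (fun x => ‖x - w j‖ ≤ 19/20)).card : ℝ)) := by
    exact_mod_cast hcard
  refine le_trans hcR ?_
  have := Finset.sum_le_sum (fun j (_ : j ∈ Finset.univ) => heach j)
  refine le_trans this ?_
  rw [Finset.sum_const]
  have hcu : (Finset.univ : Finset (Fin 3 × Bool)).card = 6 := by decide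
  rw [hcu]
  simp [nsmul_eq_mul]


lemma sum_geo_tail {r : ℝ} (h0 : 0 ≤ r) (h1 : r < 1) (S : Finset ℕ) (j₀ : ℕ)
    (hS : ∀ j ∈ S, j₀ ≤ j) : ∑ j ∈ S, r ^ j ≤ r ^ j₀ / (1 - r) := by
  rcases S.eq_empty_or_nonempty with hS0 | hne
  · rw [hS0]
    simp only [Finset.sum_empty]
    apply div_nonneg (by positivity)
    linarith
  set M := S.max' hne + 1 with hM
  have hsub : S ⊆ Finset.Ico j₀ M := by
    intro j hj
    exact Finset.mem_Ico.2 ⟨hS j hj, Nat.lt_succ_of_le (Finset.le_max' S j hj)⟩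
  have h2 : ∑ j ∈ S, r ^ j ≤ ∑ j ∈ Finset.Ico j₀ M, r ^ j :=
    Finset.sum_le_sum_of_subset_of_nonneg hsub (fun j _ _ => by positivity)
  refine le_trans h2 ?_
  rw [Finset.sum_Ico_eq_sum_range]
  have h3 : ∀ i ∈ Finset.range (M - j₀), r ^ (j₀ + i) = r ^ j₀ * r ^ i := fun i _ => pow_add r j₀ i
  rw [Finset.sum_congr rfl h3, ← Finset.mul_sum]
  have h4 : ∑ i ∈ Finset.range (M - j₀), r ^ i ≤ 1 / (1 - r) := by
    rw [geom_sum_eq (by linarith : r ≠ 1) _]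
    have e : (r ^ (M - j₀) - 1) / (r - 1) = (1 - r ^ (M - j₀)) / (1 - r) := by
      rw [← neg_div_neg_eq]; ring_nf
    rw [e, div_le_div_iff₀ (by linarith) (by linarith)]
    nlinarith [pow_nonneg h0 (M - j₀)]
  calc r ^ j₀ * ∑ i ∈ Finset.range (M - j₀), r ^ i ≤ r ^ j₀ * (1 / (1 - r)) := by
        apply mul_le_mul_of_nonneg_left h4 (by positivity)
    _ = r ^ j₀ / (1 - r) := by ring

lemma sum_geo_head {r : ℝ} (h1 : 1 < r) (S : Finset ℕ) (j₁ : ℕ) (hS : ∀ j ∈ S, j ≤ j₁) :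
    ∑ j ∈ S, r ^ j ≤ r ^ j₁ * (r / (r - 1)) := by
  have hsub : S ⊆ Finset.range (j₁ + 1) := fun j hj => Finset.mem_range.2 (Nat.lt_succ_of_le (hS j hj))
  have h2 : ∑ j ∈ S, r ^ j ≤ ∑ j ∈ Finset.range (j₁ + 1), r ^ j :=
    Finset.sum_le_sum_of_subset_of_nonneg hsub (fun j _ _ => by positivity)
  refine le_trans h2 ?_
  rw [geom_sum_eq (by linarith : r ≠ 1) _]
  rw [div_le_iff₀ (by linarith), pow_succ]
  have h3 : (0:ℝ) < r ^ j₁ := by positivity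
  have hr1 : r - 1 ≠ 0 := sub_ne_zero.mpr (by linarith)
  have e : r ^ j₁ * (r / (r - 1)) * (r - 1) = r ^ j₁ * r := by
    field_simp
  rw [e]
  linarith

lemma sumG1 {k : ℕ} (hk : 3 ≤ k) {α : ℝ} (hα : 0 < α) (B : ℕ) :
    ∑ j ∈ Finset.range B, (4:ℝ) ^ j / (1 + 2 ^ j * α) ^ k ≤ 4 / α ^ 2 := by
  obtain ⟨m, rfl⟩ : ∃ m, k = m + 3 := ⟨k - 3, by omega⟩
  rw [← Finset.sum_filter_add_sum_filter_not (Finset.range B) (fun j => (2:ℝ) ^ j * α ≤ 1)]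
  set S1 := (Finset.range B).filter (fun j => (2:ℝ) ^ j * α ≤ 1) with hS1d
  set S2 := (Finset.range B).filter (fun j => ¬ ((2:ℝ) ^ j * α ≤ 1)) with hS2d
  have hden : ∀ j : ℕ, (0:ℝ) < 1 + 2 ^ j * α := fun j => by positivity
  have hpart1 : ∑ j ∈ S1, (4:ℝ) ^ j / (1 + 2 ^ j * α) ^ (m + 3) ≤ (4/3) / α ^ 2 := by
    rcases S1.eq_empty_or_nonempty with h | hne
    · rw [h]; simp; positivity
    set j₁ := S1.max' hne with hj₁
    have hj₁mem := S1.max'_mem hne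
    have hj₁p : (2:ℝ) ^ j₁ * α ≤ 1 := by
      have := Finset.mem_filter.1 hj₁mem
      simpa using this.2
    have hterm : ∀ j ∈ S1, (4:ℝ) ^ j / (1 + 2 ^ j * α) ^ (m + 3) ≤ (4:ℝ) ^ j := by
      intro j _
      apply div_le_self (by positivity)
      apply one_le_pow₀
      nlinarith [pow_pos (show (0:ℝ) < 2 by norm_num) j]
    refine le_trans (Finset.sum_le_sum hterm) ?_
    refine le_trans (sum_geo_head (by norm_num) S1 j₁ (fun j hj => S1.le_max' j hj)) ?_
    have h4 : (4:ℝ) ^ j₁ ≤ 1 / α ^ 2 := by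
      have h2 : (2:ℝ) ^ j₁ ≤ 1 / α := by
        rw [le_div_iff₀ hα]; exact hj₁p
      have h3 : ((2:ℝ) ^ j₁) ^ 2 ≤ (1 / α) ^ 2 :=
        pow_le_pow_left₀ (by positivity) h2 2
      calc (4:ℝ) ^ j₁ = ((2:ℝ) ^ j₁) ^ 2 := by
            rw [← pow_mul, mul_comm, pow_mul]; norm_num
        _ ≤ (1 / α) ^ 2 := h3
        _ = 1 / α ^ 2 := by rw [div_pow, one_pow]
    have : (4:ℝ) / (4 - 1) = 4/3 := by norm_num
    rw [this]
    calc (4:ℝ) ^ j₁ * (4/3) ≤ (1 / α ^ 2) * (4/3) := by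
          apply mul_le_mul_of_nonneg_right h4 (by norm_num)
      _ = (4/3) / α ^ 2 := by ring
  have hpart2 : ∑ j ∈ S2, (4:ℝ) ^ j / (1 + 2 ^ j * α) ^ (m + 3) ≤ 2 / α ^ 2 := by
    rcases S2.eq_empty_or_nonempty with h | hne
    · rw [h]; simp; positivity
    set j₂ := S2.min' hne with hj₂
    have hj₂mem := S2.min'_mem hne
    have hj₂p : 1 < (2:ℝ) ^ j₂ * α := by
      have := Finset.mem_filter.1 hj₂mem
      have h2 := this.2
      simpa using not_le.1 (by simpa using h2)
    have hterm : ∀ j ∈ S2, (4:ℝ) ^ j / (1 + 2 ^ j * α) ^ (m + 3)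
        ≤ ((1:ℝ)/2) ^ j * (α ^ m / α ^ (m + 3)) := by
      intro j hj
      have hjS : 1 < (2:ℝ) ^ j * α := by
        have := Finset.mem_filter.1 hj
        simpa using not_le.1 (by simpa using this.2)
      have h2j : (0:ℝ) < 2 ^ j := by positivity
      have hxpos : (0:ℝ) < 2 ^ j * α := by positivity
      have hle : ((2:ℝ) ^ j * α) ^ (m + 3) ≤ (1 + 2 ^ j * α) ^ (m + 3) :=
        pow_le_pow_left₀ (by positivity) (by linarith) _
      have hinv : (1:ℝ) / 2 ^ j ≤ α := by
        rw [div_le_iff₀ h2j]; nlinarith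
      have hpowm : ((1:ℝ) / 2 ^ j) ^ m ≤ α ^ m := pow_le_pow_left₀ (by positivity) hinv m
      have step1 : (4:ℝ) ^ j / (1 + 2 ^ j * α) ^ (m + 3)
          ≤ (4:ℝ) ^ j / ((2:ℝ) ^ j * α) ^ (m + 3) := by
        apply div_le_div_of_nonneg_left (by positivity) (by positivity) hle
      refine le_trans step1 ?_
      have heq : (4:ℝ) ^ j / ((2:ℝ) ^ j * α) ^ (m + 3)
          = ((1:ℝ)/2) ^ j * (((1:ℝ) / 2 ^ j) ^ m / α ^ (m + 3)) := by
        rw [mul_pow]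
        have e4 : (4:ℝ) ^ j = ((2:ℝ) ^ j) ^ 2 := by
          rw [← pow_mul, mul_comm, pow_mul]; norm_num
        have e12 : ((1:ℝ)/2) ^ j = 1 / (2:ℝ) ^ j := by
          rw [div_pow, one_pow]
        rw [e4, e12, pow_add]
        field_simp
        ring_nf
        rw [← mul_pow]; norm_num
      rw [heq]
      apply mul_le_mul_of_nonneg_left _ (by positivity)
      apply div_le_div_of_nonneg_right ?_ (by positivity)
      · exact hpowm
    refine le_trans (Finset.sum_le_sum hterm) ?_
    rw [← Finset.sum_mul]
    have hsumhalf : ∑ j ∈ S2, ((1:ℝ)/2) ^ j ≤ 2 * α := by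
      have h5 := sum_geo_tail (by norm_num : (0:ℝ) ≤ 1/2) (by norm_num) S2 j₂
        (fun j hj => S2.min'_le j hj)
      have h6 : ((1:ℝ)/2) ^ j₂ ≤ α := by
        have e12 : ((1:ℝ)/2) ^ j₂ = 1 / (2:ℝ) ^ j₂ := by rw [div_pow, one_pow]
        rw [e12, div_le_iff₀ (by positivity)]
        nlinarith [pow_pos (show (0:ℝ) < 2 by norm_num) j₂]
      have : ((1:ℝ)/2) ^ j₂ / (1 - 1/2) = 2 * ((1:ℝ)/2) ^ j₂ := by ring
      rw [this] at h5
      nlinarith [pow_nonneg (show (0:ℝ) ≤ 1/2 by norm_num) j₂]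
    have hfrac : (0:ℝ) ≤ α ^ m / α ^ (m + 3) := by positivity
    calc (∑ j ∈ S2, ((1:ℝ)/2) ^ j) * (α ^ m / α ^ (m + 3))
        ≤ (2 * α) * (α ^ m / α ^ (m + 3)) := mul_le_mul_of_nonneg_right hsumhalf hfrac
      _ = 2 / α ^ 2 := by
          rw [pow_add]
          field_simp
  have := add_le_add hpart1 hpart2
  refine le_trans this ?_
  have : (4:ℝ)/3 / α ^ 2 + 2 / α ^ 2 = (4/3 + 2) / α ^ 2 := by ring
  rw [this]
  apply div_le_div_of_nonneg_right ?_ (by positivity)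
  · norm_num

lemma sumG2 {k : ℕ} (hk : 3 ≤ k) {α : ℝ} (hα : 0 < α) (B : ℕ) :
    ∑ j ∈ Finset.range B, (4:ℝ) ^ j / (1 + 2 ^ j * α) ^ k ≤ 2 / α ^ k := by
  obtain ⟨m, rfl⟩ : ∃ m, k = m + 3 := ⟨k - 3, by omega⟩
  have hterm : ∀ j ∈ Finset.range B, (4:ℝ) ^ j / (1 + 2 ^ j * α) ^ (m + 3)
      ≤ ((1:ℝ)/2) ^ j * (1 / α ^ (m + 3)) := by
    intro j _
    have h2j : (1:ℝ) ≤ 2 ^ j := one_le_pow₀ (by norm_num)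
    have hle : ((2:ℝ) ^ j * α) ^ (m + 3) ≤ (1 + 2 ^ j * α) ^ (m + 3) :=
      pow_le_pow_left₀ (by positivity) (by nlinarith) _
    have step1 : (4:ℝ) ^ j / (1 + 2 ^ j * α) ^ (m + 3)
        ≤ (4:ℝ) ^ j / ((2:ℝ) ^ j * α) ^ (m + 3) :=
      div_le_div_of_nonneg_left (by positivity) (by positivity) hle
    refine le_trans step1 ?_
    have h8 : ((2:ℝ) ^ j) ^ 3 ≤ ((2:ℝ) ^ j) ^ (m + 3) :=
      pow_le_pow_right₀ h2j (by omega)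
    have heq : (4:ℝ) ^ j / ((2:ℝ) ^ j * α) ^ (m + 3)
        = (4:ℝ) ^ j / (((2:ℝ) ^ j) ^ (m + 3) * α ^ (m + 3)) := by rw [mul_pow]
    rw [heq]
    have step2 : (4:ℝ) ^ j / (((2:ℝ) ^ j) ^ (m + 3) * α ^ (m + 3))
        ≤ (4:ℝ) ^ j / (((2:ℝ) ^ j) ^ 3 * α ^ (m + 3)) := by
      apply div_le_div_of_nonneg_left (by positivity) (by positivity) ?_
      apply mul_le_mul_of_nonneg_right h8 (by positivity)
    refine le_trans step2 ?_
    have heq2 : (4:ℝ) ^ j / (((2:ℝ) ^ j) ^ 3 * α ^ (m + 3))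
        = ((1:ℝ)/2) ^ j * (1 / α ^ (m + 3)) := by
      have e4 : (4:ℝ) ^ j = ((2:ℝ) ^ j) ^ 2 := by
        rw [← pow_mul, mul_comm, pow_mul]; norm_num
      have e12 : ((1:ℝ)/2) ^ j = 1 / (2:ℝ) ^ j := by rw [div_pow, one_pow]
      rw [e4, e12]
      have : ((2:ℝ) ^ j) ^ 3 = ((2:ℝ) ^ j) ^ 2 * (2:ℝ) ^ j := by ring
      rw [this]
      field_simp
    rw [heq2]
  refine le_trans (Finset.sum_le_sum hterm) ?_
  rw [← Finset.sum_mul]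
  have h5 := sum_geo_tail (by norm_num : (0:ℝ) ≤ 1/2) (by norm_num) (Finset.range B) 0
    (fun j _ => Nat.zero_le j)
  have h6 : ((1:ℝ)/2) ^ 0 / (1 - 1/2) = 2 := by norm_num
  rw [h6] at h5
  calc (∑ j ∈ Finset.range B, ((1:ℝ)/2) ^ j) * (1 / α ^ (m + 3))
      ≤ 2 * (1 / α ^ (m + 3)) := by
        apply mul_le_mul_of_nonneg_right h5 (by positivity)
    _ = 2 / α ^ (m + 3) := by ring

lemma sumL {k : ℕ} (hk : 3 ≤ k) {α q β : ℝ} (hα : 0 < α) (hq : 0 < q) (hβ0 : 0 < β)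
    (hβ : β ≤ max 1 α) (S : Finset ℕ) (hS : ∀ j ∈ S, q < (2:ℝ) ^ j * α) :
    ∑ j ∈ S, 1 / (1 + 2 ^ j * α) ^ k ≤ (4/3) / (q ^ 2 * β ^ (k - 2)) := by
  obtain ⟨m, hm⟩ : ∃ m, k = m + 2 := ⟨k - 2, by omega⟩
  subst hm
  have hkm : m + 2 - 2 = m := by omega
  rw [hkm]
  rcases S.eq_empty_or_nonempty with h | hne
  · rw [h]; simp; positivity
  set j₂ := S.min' hne with hj₂
  have hterm : ∀ j ∈ S, (1:ℝ) / (1 + 2 ^ j * α) ^ (m + 2)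
      ≤ ((1:ℝ)/4) ^ j * (1 / (α ^ 2 * β ^ m)) := by
    intro j hj
    have h2j : (1:ℝ) ≤ 2 ^ j := one_le_pow₀ (by norm_num)
    have hxpos : (0:ℝ) < 2 ^ j * α := by positivity
    have hβle : β ≤ 1 + 2 ^ j * α := by
      rcases max_le_iff.1 (le_refl (max 1 α)) with ⟨h1, h2⟩
      rcases le_total 1 α with hc | hc
      · have : max 1 α = α := max_eq_right hc
        rw [this] at hβ
        nlinarith
      · have : max 1 α = 1 := max_eq_left hc
        rw [this] at hβ
        nlinarith
    have hlow : ((2:ℝ) ^ j * α) ^ 2 * β ^ m ≤ (1 + 2 ^ j * α) ^ (m + 2) := by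
      have e : (m + 2) = 2 + m := by omega
      rw [e, pow_add]
      have h1 : ((2:ℝ) ^ j * α) ^ 2 ≤ (1 + 2 ^ j * α) ^ 2 :=
        pow_le_pow_left₀ (by positivity) (by linarith) _
      have h2 : β ^ m ≤ (1 + 2 ^ j * α) ^ m := pow_le_pow_left₀ (by positivity) hβle _
      have := mul_le_mul h1 h2 (by positivity) (by positivity)
      exact this
    have hpos2 : (0:ℝ) < ((2:ℝ) ^ j * α) ^ 2 * β ^ m := by positivity
    have step1 : (1:ℝ) / (1 + 2 ^ j * α) ^ (m + 2)
        ≤ 1 / (((2:ℝ) ^ j * α) ^ 2 * β ^ m) :=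
      div_le_div_of_nonneg_left (by norm_num) hpos2 hlow
    refine le_trans step1 ?_
    have heq : (1:ℝ) / (((2:ℝ) ^ j * α) ^ 2 * β ^ m)
        = ((1:ℝ)/4) ^ j * (1 / (α ^ 2 * β ^ m)) := by
      have e4 : ((2:ℝ) ^ j) ^ 2 = (4:ℝ) ^ j := by
        rw [← pow_mul, mul_comm, pow_mul]; norm_num
      have e14 : ((1:ℝ)/4) ^ j = 1 / (4:ℝ) ^ j := by rw [div_pow, one_pow]
      rw [mul_pow, e4, e14]
      field_simp
    rw [heq]
  refine le_trans (Finset.sum_le_sum hterm) ?_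
  rw [← Finset.sum_mul]
  have h5 := sum_geo_tail (by norm_num : (0:ℝ) ≤ 1/4) (by norm_num) S j₂
    (fun j hj => S.min'_le j hj)
  have h6 : ((1:ℝ)/4) ^ j₂ ≤ (α / q) ^ 2 := by
    have hq2 : q < (2:ℝ) ^ j₂ * α := hS j₂ (S.min'_mem hne)
    have h2j : (0:ℝ) < 2 ^ j₂ := by positivity
    have h7 : (1:ℝ) / 2 ^ j₂ ≤ α / q := by
      rw [div_le_div_iff₀ h2j hq]
      nlinarith
    have h8 : ((1:ℝ) / 2 ^ j₂) ^ 2 ≤ (α / q) ^ 2 := pow_le_pow_left₀ (by positivity) h7 2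
    calc ((1:ℝ)/4) ^ j₂ = 1 / ((2:ℝ) ^ j₂) ^ 2 := by
          rw [div_pow, one_pow, ← pow_mul, mul_comm j₂ 2, pow_mul]
          norm_num
      _ = ((1:ℝ) / 2 ^ j₂) ^ 2 := by rw [div_pow, one_pow]
      _ ≤ (α / q) ^ 2 := h8
  have h9 : ∑ j ∈ S, ((1:ℝ)/4) ^ j ≤ (4/3) * (α/q) ^ 2 := by
    have : ((1:ℝ)/4) ^ j₂ / (1 - 1/4) = (4/3) * ((1:ℝ)/4) ^ j₂ := by ring
    rw [this] at h5
    nlinarith [pow_nonneg (show (0:ℝ) ≤ 1/4 by norm_num) j₂]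
  calc (∑ j ∈ S, ((1:ℝ)/4) ^ j) * (1 / (α ^ 2 * β ^ m))
      ≤ ((4/3) * (α/q) ^ 2) * (1 / (α ^ 2 * β ^ m)) := by
        apply mul_le_mul_of_nonneg_right h9 (by positivity)
    _ = (4/3) / (q ^ 2 * β ^ m) := by
        rw [div_pow]
        field_simp

end LKSB

set_option maxHeartbeats 2000000 in
theorem localized_kernel_sum_bound
    (k : ℕ) (hk : 3 ≤ k) (c : ℝ) (hc : 0 < c) :
    ∃ C : ℝ, 0 < C ∧
      ∀ (N : ℕ), 1 ≤ N → ∀ ν : ℝ, 0 < ν →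
      ∀ F : ℝ → ℝ, (∀ t : ℝ, 0 ≤ t → |F t| ≤ c / (1 + N * t)^k) →
      ∀ Ξ : Finset (EuclideanSpace ℝ (Fin 3)),
        (∀ x ∈ Ξ, ‖x‖ = 1) →
        (∀ x ∈ Ξ, ∀ y ∈ Ξ, x ≠ y → ν / N ≤ geodesicDist x y) →
        ∀ ξ0 ∈ Ξ, ∀ ξ : EuclideanSpace ℝ (Fin 3), ‖ξ‖ = 1 →
          geodesicDist ξ ξ0 ≤ ν / (2 * N) →
          ∑ ξm ∈ Ξ.erase ξ0, |F (geodesicDist ξ ξm)| ≤ C / ν^(k-1) := by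
  classical
  obtain ⟨m, rfl⟩ : ∃ m, k = m + 3 := ⟨k - 3, by omega⟩
  refine ⟨200 * 8 ^ (m + 3) * c, by positivity, ?_⟩
  intro N hN ν hν F hF Ξ hunit hsep ξ0 hξ0 ξ hξu hclose
  have hN0 : (0:ℝ) < N := by exact_mod_cast Nat.lt_of_lt_of_le Nat.zero_lt_one hN
  have hN1 : (1:ℝ) ≤ N := by exact_mod_cast hN
  set τ : ℝ := ν / N with hτdef
  have hτ : 0 < τ := by positivity
  have hνk : (0:ℝ) < ν ^ (m+3-1) := by positivity
  by_cases hτπ : Real.pi < τ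
  · have he : Ξ.erase ξ0 = ∅ := by
      rw [Finset.eq_empty_iff_forall_notMem]
      intro x hx
      obtain ⟨hxne, hxΞ⟩ := Finset.mem_erase.1 hx
      have h1 := hsep x hxΞ ξ0 hξ0 hxne
      have h2 := LKSB.geo_le_pi x ξ0
      linarith
    rw [he, Finset.sum_empty]
    positivity
  push_neg at hτπ
  set S := Ξ.erase ξ0 with hSdef
  set α : ℝ := ν / 8 with hαdef
  have hα : 0 < α := by positivity
  have hΞsep : ∀ x ∈ Ξ, ∀ y ∈ Ξ, x ≠ y → τ / 2 ≤ ‖x - y‖ := by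
    intro x hx y hy hxy
    have h1 := hsep x hx y hy hxy
    have h2 := LKSB.arc_le_chord (hunit x hx) (hunit y hy)
    nlinarith [LKSB.geo_nonneg x y]
  have hclose' : ‖ξ - ξ0‖ ≤ τ / 2 := by
    have h1 := LKSB.chord_le_arc hξu (hunit ξ0 hξ0)
    have h2 : ν / (2 * N) = τ / 2 := by rw [hτdef]; ring
    rw [h2] at hclose
    linarith
  have hSfacts : ∀ x ∈ S, ‖x‖ = 1 ∧ τ / 8 ≤ ‖ξ - x‖ ∧ ‖ξ - x‖ ≤ 2 := by
    intro x hx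
    obtain ⟨hxne, hxΞ⟩ := Finset.mem_erase.1 hx
    have hxu := hunit x hxΞ
    refine ⟨hxu, ?_, ?_⟩
    · have h1 := hsep ξ0 hξ0 x hxΞ (Ne.symm hxne)
      have h2 := LKSB.arc_le_chord (hunit ξ0 hξ0) hxu
      have h3 : ‖ξ0 - x‖ ≤ ‖ξ0 - ξ‖ + ‖ξ - x‖ := by
        have e : ξ0 - x = (ξ0 - ξ) + (ξ - x) := by abel
        rw [e]; exact norm_add_le _ _
      have h4 : ‖ξ0 - ξ‖ = ‖ξ - ξ0‖ := norm_sub_rev _ _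
      have h5 := LKSB.geo_nonneg ξ0 x
      nlinarith
    · calc ‖ξ - x‖ ≤ ‖ξ‖ + ‖x‖ := norm_sub_le _ _
        _ = 2 := by rw [hξu, hxu]; norm_num
  have hterm : ∀ x ∈ S, |F (geodesicDist ξ x)| ≤ c / (1 + N * ‖ξ - x‖) ^ (m+3) := by
    intro x hx
    obtain ⟨hxu, _, _⟩ := hSfacts x hx
    have h1 := hF (geodesicDist ξ x) (LKSB.geo_nonneg ξ x)
    have h2 := LKSB.chord_le_arc hξu hxu
    have hn0 : (0:ℝ) ≤ ‖ξ - x‖ := norm_nonneg _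
    have hld : (0:ℝ) < (1 + N * ‖ξ - x‖) ^ (m+3) := by positivity
    refine le_trans h1 ?_
    apply div_le_div_of_nonneg_left hc.le hld
    apply pow_le_pow_left₀ (by positivity)
    nlinarith
  set g : EuclideanSpace ℝ (Fin 3) → ℕ := fun x => Nat.log 2 ⌊‖ξ - x‖ * 8 / τ⌋₊ with hg
  set B : ℕ := Nat.log 2 ⌊16 / τ⌋₊ + 1 with hB
  have hrfacts : ∀ x ∈ S, (2:ℝ) ^ (g x) * (τ/8) ≤ ‖ξ - x‖
      ∧ ‖ξ - x‖ ≤ (2:ℝ) ^ (g x + 1) * (τ/8) ∧ g x ∈ Finset.range B := by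
    intro x hx
    obtain ⟨hxu, hlo, hhi⟩ := hSfacts x hx
    have hr1 : (1:ℝ) ≤ ‖ξ - x‖ * 8 / τ := by
      rw [le_div_iff₀ hτ]; linarith
    have hr0 : (0:ℝ) ≤ ‖ξ - x‖ * 8 / τ := by linarith
    have hfl1 : 1 ≤ ⌊‖ξ - x‖ * 8 / τ⌋₊ := Nat.le_floor (by exact_mod_cast hr1)
    have hgx : g x = Nat.log 2 ⌊‖ξ - x‖ * 8 / τ⌋₊ := by rw [hg]
    refine ⟨?_, ?_, ?_⟩
    · have h := Nat.pow_log_le_self 2 (by omega : ⌊‖ξ - x‖ * 8 / τ⌋₊ ≠ 0)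
      have h2 : ((2:ℝ)) ^ (g x) ≤ (⌊‖ξ - x‖ * 8 / τ⌋₊ : ℝ) := by
        rw [hgx]
        exact_mod_cast h
      have h3 : ((⌊‖ξ - x‖ * 8 / τ⌋₊ : ℝ)) ≤ ‖ξ - x‖ * 8 / τ := Nat.floor_le hr0
      have h4 : (2:ℝ) ^ (g x) ≤ ‖ξ - x‖ * 8 / τ := le_trans h2 h3
      rw [le_div_iff₀ hτ] at h4
      nlinarith
    · have h := Nat.lt_pow_succ_log_self (by norm_num : 1 < 2) ⌊‖ξ - x‖ * 8 / τ⌋₊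
      have h2 : ‖ξ - x‖ * 8 / τ < (⌊‖ξ - x‖ * 8 / τ⌋₊ : ℝ) + 1 := Nat.lt_floor_add_one _
      have h3 : ((⌊‖ξ - x‖ * 8 / τ⌋₊ : ℝ)) + 1 ≤ (2:ℝ) ^ (g x + 1) := by
        rw [hgx]
        have h4 : ⌊‖ξ - x‖ * 8 / τ⌋₊ + 1 ≤ 2 ^ (Nat.log 2 ⌊‖ξ - x‖ * 8 / τ⌋₊ + 1) := h
        exact_mod_cast h4
      have h5 : ‖ξ - x‖ * 8 / τ ≤ (2:ℝ) ^ (g x + 1) := by linarith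
      rw [div_le_iff₀ hτ] at h5
      nlinarith
    · rw [Finset.mem_range, hB, hgx]
      have h6 : ⌊‖ξ - x‖ * 8 / τ⌋₊ ≤ ⌊16 / τ⌋₊ := by
        apply Nat.floor_le_floor
        rw [div_le_div_iff₀ hτ hτ]
        nlinarith
      exact Nat.lt_succ_of_le (Nat.log_mono_right h6)
  have hNτ : (N:ℝ) * τ = ν := by
    rw [hτdef]; field_simp
  have hsplit : ∑ x ∈ S, |F (geodesicDist ξ x)| =
      ∑ j ∈ Finset.range B, ∑ x ∈ S.filter (fun x => g x = j), |F (geodesicDist ξ x)| :=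
    (Finset.sum_fiberwise_of_maps_to (fun x hx => (hrfacts x hx).2.2) _).symm
  have hfibsum : ∀ j ∈ Finset.range B,
      ∑ x ∈ S.filter (fun x => g x = j), |F (geodesicDist ξ x)|
      ≤ ((S.filter (fun x => g x = j)).card : ℝ) * (c / (1 + 2 ^ j * α) ^ (m+3)) := by
    intro j _
    have hub : ∀ x ∈ S.filter (fun x => g x = j),
        |F (geodesicDist ξ x)| ≤ c / (1 + 2 ^ j * α) ^ (m+3) := by
      intro x hx
      obtain ⟨hxS, hgx⟩ := Finset.mem_filter.1 hx
      refine le_trans (hterm x hxS) ?_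
      have hlow := (hrfacts x hxS).1
      rw [hgx] at hlow
      have h1 : (2:ℝ) ^ j * α ≤ N * ‖ξ - x‖ := by
        have h2 := mul_le_mul_of_nonneg_left hlow hN0.le
        have e : (N:ℝ) * ((2:ℝ) ^ j * (τ/8)) = 2 ^ j * α := by
          rw [hαdef, ← hNτ]; ring
        linarith [e ▸ h2]
      apply div_le_div_of_nonneg_left hc.le (by positivity)
      apply pow_le_pow_left₀ (by positivity)
      linarith
    have h3 := Finset.sum_le_card_nsmul _ _ _ hub
    rwa [nsmul_eq_mul] at h3
  have hsmallcount : ∀ j : ℕ, (2:ℝ) ^ (j+1) * τ ≤ 38/5 →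
      ((S.filter (fun x => g x = j)).card : ℝ) ≤ 49 * 4 ^ j := by
    intro j hjs
    have hmem : ∀ x ∈ S.filter (fun x => g x = j), x ∈ Ξ := by
      intro x hx
      exact (Finset.mem_erase.1 (Finset.mem_filter.1 hx).1).2
    have hcap := LKSB.cap_count ξ hξu (δ := τ/2) (R := 2 ^ (j+1) * (τ/8))
      (by positivity) (by nlinarith) (S.filter (fun x => g x = j))
      (fun x hx => hunit x (hmem x hx))
      (fun x hx => by
        have h1 := (hrfacts x (Finset.mem_filter.1 hx).1).2.1
        rw [(Finset.mem_filter.1 hx).2] at h1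
        rw [norm_sub_rev]
        exact h1)
      (fun x hx y hy hxy => hΞsep x (hmem x hx) y (hmem y hy) hxy)
    refine le_trans hcap ?_
    have e : 10 * ((2:ℝ) ^ (j+1) * (τ/8)) / (τ/2) + 2 = 5 * 2 ^ j + 2 := by
      rw [pow_succ]
      field_simp
      ring
    rw [e]
    have h2j : (1:ℝ) ≤ 2 ^ j := one_le_pow₀ (by norm_num)
    have e4 : (4:ℝ) ^ j = ((2:ℝ) ^ j) ^ 2 := by
      rw [← pow_mul, mul_comm, pow_mul]; norm_num
    nlinarith
  have hglobcount : ∀ j : ℕ,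
      ((S.filter (fun x => g x = j)).card : ℝ) ≤ 4374 * (N:ℝ)^2 / ν^2 := by
    intro j
    have hmem : ∀ x ∈ S.filter (fun x => g x = j), x ∈ Ξ := by
      intro x hx
      exact (Finset.mem_erase.1 (Finset.mem_filter.1 hx).1).2
    have hglob := LKSB.global_count (δ := τ/2) (by positivity)
      (S.filter (fun x => g x = j))
      (fun x hx => hunit x (hmem x hx))
      (fun x hx y hy hxy => hΞsep x (hmem x hx) y (hmem y hy) hxy)
    refine le_trans hglob ?_
    have hπ : Real.pi < 3.15 := Real.pi_lt_d2
    have h1 : 10 / (τ/2) + 2 ≤ 27 / τ := by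
      have e1 : (10:ℝ) / (τ/2) = 20 / τ := by
        field_simp
        norm_num
      have e2 : (27:ℝ) / τ = 20 / τ + 7 / τ := by ring
      have e3 : (2:ℝ) ≤ 7 / τ := by
        rw [le_div_iff₀ hτ]; nlinarith
      rw [e1, e2]
      linarith
    have h0 : (0:ℝ) ≤ 10 / (τ/2) + 2 := by positivity
    have h2 : 6 * (10 / (τ/2) + 2) ^ 2 ≤ 6 * (27 / τ) ^ 2 := by nlinarith
    refine le_trans h2 (le_of_eq ?_)
    rw [hτdef]
    have hν0 : ν ≠ 0 := ne_of_gt hν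
    have hN0' : (N:ℝ) ≠ 0 := ne_of_gt hN0
    field_simp
    ring

  have hexp : m + 3 - 1 = m + 2 := rfl
  rw [hexp]
  rw [hsplit]
  refine le_trans (Finset.sum_le_sum hfibsum) ?_
  rw [← Finset.sum_filter_add_sum_filter_not (Finset.range B)
    (fun j => (2:ℝ) ^ (j+1) * τ ≤ 38/5)]
  set SJ := (Finset.range B).filter (fun j => (2:ℝ) ^ (j+1) * τ ≤ 38/5) with hSJ
  set LJ := (Finset.range B).filter (fun j => ¬ ((2:ℝ) ^ (j+1) * τ ≤ 38/5)) with hLJ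
  have h8p : (0:ℝ) < 8 ^ (m+3) := by positivity
  have hν2 : (0:ℝ) < ν ^ 2 := by positivity
  have hνm2 : (0:ℝ) < ν ^ (m+2) := by positivity
  have hνm3 : (0:ℝ) < ν ^ (m+3) := by positivity
  have hsmall : ∑ j ∈ SJ, ((S.filter (fun x => g x = j)).card : ℝ) * (c / (1 + 2 ^ j * α) ^ (m+3))
      ≤ 49 * c * ∑ j ∈ Finset.range B, (4:ℝ) ^ j / (1 + 2 ^ j * α) ^ (m+3) := by
    have hterm2 : ∀ j ∈ SJ,
        ((S.filter (fun x => g x = j)).card : ℝ) * (c / (1 + 2 ^ j * α) ^ (m+3))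
        ≤ 49 * c * ((4:ℝ) ^ j / (1 + 2 ^ j * α) ^ (m+3)) := by
      intro j hj
      have hjs : (2:ℝ) ^ (j+1) * τ ≤ 38/5 := by
        have := Finset.mem_filter.1 hj
        simpa using this.2
      have h1 := hsmallcount j hjs
      have hd : (0:ℝ) ≤ c / (1 + 2 ^ j * α) ^ (m+3) := by positivity
      calc ((S.filter (fun x => g x = j)).card : ℝ) * (c / (1 + 2 ^ j * α) ^ (m+3))
          ≤ (49 * 4 ^ j) * (c / (1 + 2 ^ j * α) ^ (m+3)) := mul_le_mul_of_nonneg_right h1 hd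
        _ = 49 * c * ((4:ℝ) ^ j / (1 + 2 ^ j * α) ^ (m+3)) := by ring
    refine le_trans (Finset.sum_le_sum hterm2) ?_
    rw [← Finset.mul_sum]
    apply mul_le_mul_of_nonneg_left ?_ (by positivity)
    apply Finset.sum_le_sum_of_subset_of_nonneg (Finset.filter_subset _ _)
    intro j _ _
    positivity
  have hq : (0:ℝ) < 19 * N / 40 := by positivity
  have hLJmem : ∀ j ∈ LJ, (19 * (N:ℝ) / 40) < 2 ^ j * α := by
    intro j hj
    have hjs : 38/5 < (2:ℝ) ^ (j+1) * τ := by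
      have := Finset.mem_filter.1 hj
      have h2 := this.2
      simp only [not_le] at h2
      exact h2
    have e : (2:ℝ) ^ j * α = (2 ^ (j+1) * τ) * N / 16 := by
      rw [hαdef, ← hNτ, pow_succ]; ring
    rw [e]
    have h3 := mul_lt_mul_of_pos_right hjs hN0
    linarith
  have hlarge : ∑ j ∈ LJ, ((S.filter (fun x => g x = j)).card : ℝ) * (c / (1 + 2 ^ j * α) ^ (m+3))
      ≤ (4374 * (N:ℝ)^2 / ν^2) * c * ∑ j ∈ LJ, 1 / (1 + 2 ^ j * α) ^ (m+3) := by
    rw [Finset.mul_sum]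
    apply Finset.sum_le_sum
    intro j _
    have h1 := hglobcount j
    have hd : (0:ℝ) ≤ c / (1 + 2 ^ j * α) ^ (m+3) := by positivity
    calc ((S.filter (fun x => g x = j)).card : ℝ) * (c / (1 + 2 ^ j * α) ^ (m+3))
        ≤ (4374 * (N:ℝ)^2 / ν^2) * (c / (1 + 2 ^ j * α) ^ (m+3)) :=
          mul_le_mul_of_nonneg_right h1 hd
      _ = 4374 * (N:ℝ)^2 / ν^2 * c * (1 / (1 + 2 ^ j * α) ^ (m+3)) := by ring
  have hk' : 3 ≤ m + 3 := by omega
  rcases le_or_gt ν 8 with hν8 | hν8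
  · -- case ν ≤ 8
    have hcase1 : ∀ D : ℝ, 0 ≤ D → D ≤ 51200 →
        D * c / ν ^ 2 ≤ 100 * 8 ^ (m+3) * c / ν ^ (m+2) := by
      intro D hD0 hD5
      rw [div_le_div_iff₀ hν2 hνm2]
      have e : ν ^ (m+2) = ν ^ m * ν ^ 2 := by rw [← pow_add]
      have e8 : (8:ℝ) ^ (m+3) = 8 ^ m * 512 := by rw [pow_add]; norm_num
      have hp : ν ^ m ≤ 8 ^ m := pow_le_pow_left₀ hν.le hν8 m
      have hcν : (0:ℝ) ≤ c * ν ^ 2 := by positivity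
      calc D * c * ν ^ (m+2) = (D * (c * ν ^ 2)) * ν ^ m := by rw [e]; ring
        _ ≤ (D * (c * ν ^ 2)) * 8 ^ m := by
            apply mul_le_mul_of_nonneg_left hp (by positivity)
        _ ≤ (51200 * (c * ν ^ 2)) * 8 ^ m := by
            apply mul_le_mul_of_nonneg_right ?_ (by positivity)
            exact mul_le_mul_of_nonneg_right hD5 hcν
        _ = 100 * 8 ^ (m+3) * c * ν ^ 2 := by rw [e8]; ring
    have hG := LKSB.sumG1 hk' hα B
    have hL := LKSB.sumL hk' hα hq one_pos (le_max_left 1 α) LJ hLJmem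
    have hone : (1:ℝ) ^ (m + 3 - 2) = 1 := one_pow _
    rw [hone] at hL
    have hα2 : 4 / α ^ 2 = 256 / ν ^ 2 := by
      rw [hαdef, div_pow]
      field_simp
      ring
    rw [hα2] at hG
    have hp1 : 49 * c * ∑ j ∈ Finset.range B, (4:ℝ) ^ j / (1 + 2 ^ j * α) ^ (m+3)
        ≤ 12544 * c / ν ^ 2 := by
      have := mul_le_mul_of_nonneg_left hG (by positivity : (0:ℝ) ≤ 49 * c)
      calc 49 * c * ∑ j ∈ Finset.range B, (4:ℝ) ^ j / (1 + 2 ^ j * α) ^ (m+3)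
          ≤ 49 * c * (256 / ν ^ 2) := this
        _ = 12544 * c / ν ^ 2 := by ring
    have hp2 : (4374 * (N:ℝ)^2 / ν^2) * c * ∑ j ∈ LJ, 1 / (1 + 2 ^ j * α) ^ (m+3)
        ≤ (9331200/361) * c / ν ^ 2 := by
      have h2 := mul_le_mul_of_nonneg_left hL (by positivity : (0:ℝ) ≤ (4374 * (N:ℝ)^2 / ν^2) * c)
      refine le_trans h2 (le_of_eq ?_)
      have hN0' : (N:ℝ) ≠ 0 := ne_of_gt hN0
      have hν0' : ν ≠ 0 := ne_of_gt hν
      field_simp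
      ring
    have hfin1 := hcase1 12544 (by norm_num) (by norm_num)
    have hfin2 := hcase1 (9331200/361) (by norm_num) (by norm_num)
    have : (200:ℝ) * 8 ^ (m+3) * c / ν ^ (m+2)
        = 100 * 8 ^ (m+3) * c / ν ^ (m+2) + 100 * 8 ^ (m+3) * c / ν ^ (m+2) := by ring
    rw [this]
    have t1 := le_trans (le_trans hsmall hp1) hfin1
    have t2 := le_trans (le_trans hlarge hp2) hfin2
    exact add_le_add t1 t2
  · -- case 8 < ν
    have hcase2 : ∀ D : ℝ, 0 ≤ D → D ≤ 800 →
        D * 8 ^ (m+3) * c / ν ^ (m+3) ≤ 100 * 8 ^ (m+3) * c / ν ^ (m+2) := by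
      intro D hD0 hD8
      rw [div_le_div_iff₀ hνm3 hνm2]
      have e : ν ^ (m+3) = ν ^ (m+2) * ν := by rw [pow_succ]
      have h3 : D ≤ 100 * ν := by linarith
      calc D * 8 ^ (m+3) * c * ν ^ (m+2) = D * (8 ^ (m+3) * c * ν ^ (m+2)) := by ring
        _ ≤ (100 * ν) * (8 ^ (m+3) * c * ν ^ (m+2)) :=
            mul_le_mul_of_nonneg_right h3 (by positivity)
        _ = 100 * 8 ^ (m+3) * c * (ν ^ (m+2) * ν) := by ring
        _ = 100 * 8 ^ (m+3) * c * ν ^ (m+3) := by rw [← e]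
    have hG := LKSB.sumG2 hk' hα B
    have hL := LKSB.sumL hk' hα hq hα (le_max_right 1 α) LJ hLJmem
    have hαm3 : α ^ (m+3) = ν ^ (m+3) / 8 ^ (m+3) := by rw [hαdef, div_pow]
    have hkm : m + 3 - 2 = m + 1 := rfl
    rw [hkm] at hL
    have hαm1 : α ^ (m+1) = ν ^ (m+1) / 8 ^ (m+1) := by rw [hαdef, div_pow]
    have hν0' : ν ≠ 0 := ne_of_gt hν
    have hN0' : (N:ℝ) ≠ 0 := ne_of_gt hN0
    have hp1 : 49 * c * ∑ j ∈ Finset.range B, (4:ℝ) ^ j / (1 + 2 ^ j * α) ^ (m+3)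
        ≤ 98 * 8 ^ (m+3) * c / ν ^ (m+3) := by
      have h2 := mul_le_mul_of_nonneg_left hG (by positivity : (0:ℝ) ≤ 49 * c)
      refine le_trans h2 (le_of_eq ?_)
      rw [hαm3]
      field_simp
      ring
    have hp2 : (4374 * (N:ℝ)^2 / ν^2) * c * ∑ j ∈ LJ, 1 / (1 + 2 ^ j * α) ^ (m+3)
        ≤ (145800/361) * 8 ^ (m+3) * c / ν ^ (m+3) := by
      have h2 := mul_le_mul_of_nonneg_left hL (by positivity : (0:ℝ) ≤ (4374 * (N:ℝ)^2 / ν^2) * c)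
      refine le_trans h2 (le_of_eq ?_)
      rw [hαm1]
      have e8 : (8:ℝ) ^ (m+3) = 8 ^ (m+1) * 64 := by rw [pow_add, pow_add]; ring
      have eν : ν ^ (m+3) = ν ^ (m+1) * ν ^ 2 := by rw [← pow_add]
      rw [e8, eν]
      have h81 : ((8:ℝ)) ^ (m+1) ≠ 0 := by positivity
      have hν1 : (ν:ℝ) ^ (m+1) ≠ 0 := by positivity
      field_simp
      ring
    have hfin1 := hcase2 98 (by norm_num) (by norm_num)
    have hfin2 := hcase2 (145800/361) (by norm_num) (by norm_num)
    have : (200:ℝ) * 8 ^ (m+3) * c / ν ^ (m+2)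
        = 100 * 8 ^ (m+3) * c / ν ^ (m+2) + 100 * 8 ^ (m+3) * c / ν ^ (m+2) := by ring
    rw [this]
    have t1' := le_trans (le_trans hsmall hp1) hfin1
    have t2 := le_trans (le_trans hlarge hp2) hfin2
    exact add_le_add t1' t2
end
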